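/- Every 4×4 principal submatrix of the 5×5 symmetric matrix with zero diagonal, entry 4 in positions (1,2) and (2,1), and entry 1 in all other off-diagonal positions, has at most one positive eigenvalue. -/

import Mathlib

open Matrix Finset

private lemma eig_det_zero {A : Matrix (Fin 4) (Fin 4) ℝ} (hA : A.IsHermitian) (m : Fin 4) :
    (A - hA.eigenvalues m • 1).det = 0 := by
  rw [← Matrix.exists_mulVec_eq_zero_iff]
  refine ⟨⇑(hA.eigenvectorBasis m), ?_, ?_⟩
  · have hnz := hA.eigenvectorBasis.orthonormal.ne_zero m
    intro h
    apply hnz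
    ext j
    exact congrFun h j
  · rw [sub_mulVec, hA.mulVec_eigenvectorBasis, smul_mulVec, one_mulVec]
    simp

private lemma trace_eq_sum_eig {A : Matrix (Fin 4) (Fin 4) ℝ} (hA : A.IsHermitian) :
    A.trace = ∑ m, hA.eigenvalues m := by
  simp [hA.trace_eq_sum_eigenvalues]

private lemma atmost (ev : Fin 4 → ℝ) (c lb : ℝ) (hc : 0 < 2*c + 2*lb)
    (hsum : ∑ m, ev m = 0)
    (hpos : ∀ m, 0 < ev m → c ≤ ev m) (hlb : ∀ m, lb ≤ ev m) :
    (Finset.univ.filter fun m => 0 < ev m).card ≤ 1 := by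
  rw [Finset.card_le_one]
  intro a ha b hb
  simp only [Finset.mem_filter] at ha hb
  by_contra hne
  have pa := hpos a ha.2
  have pb := hpos b hb.2
  have hsub : ({a, b} : Finset (Fin 4)) ⊆ Finset.univ := Finset.subset_univ _
  have hsplit := Finset.sum_sdiff (f := ev) hsub
  rw [hsum] at hsplit
  have hpair : ∑ m ∈ ({a, b} : Finset (Fin 4)), ev m = ev a + ev b :=
    Finset.sum_pair hne
  have hcard : (Finset.univ \ ({a, b} : Finset (Fin 4))).card = 2 := by
    rw [Finset.card_sdiff_of_subset hsub, Finset.card_pair hne]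
    simp
  have hge : (2 : ℝ) * lb ≤ ∑ m ∈ Finset.univ \ ({a, b} : Finset (Fin 4)), ev m := by
    calc (2:ℝ) * lb = (Finset.univ \ ({a, b} : Finset (Fin 4))).card • lb := by
          rw [hcard]; simp [two_mul]
      _ ≤ _ := Finset.card_nsmul_le_sum _ _ _ (fun m _ => hlb m)
  linarith

private lemma caseB {A : Matrix (Fin 4) (Fin 4) ℝ} (hA : A.IsHermitian)
    (hEq : A = !![0,4,1,1;4,0,1,1;1,1,0,1;1,1,1,0]) :
    (Finset.univ.filter fun m => 0 < hA.eigenvalues m).card ≤ 1 := by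
  have hroot : ∀ m, hA.eigenvalues m = 0 ∨ hA.eigenvalues m = 5 ∨
      hA.eigenvalues m = -1 ∨ hA.eigenvalues m = -4 := by
    intro m
    have hd := eig_det_zero hA m
    obtain ⟨x, hx⟩ : ∃ x, hA.eigenvalues m = x := ⟨_, rfl⟩
    rw [hx] at hd ⊢
    rw [hEq] at hd
    have h4 : x*(x-5)*(x+1)*(x+4) = 0 := by
      rw [Matrix.det_succ_row_zero] at hd
      simp [Fin.sum_univ_succ, Matrix.det_fin_three, Matrix.one_apply, Fin.succAbove] at hd
      linarith [hd]
    rcases mul_eq_zero.1 h4 with h | h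
    · rcases mul_eq_zero.1 h with h | h
      · rcases mul_eq_zero.1 h with h | h
        · exact Or.inl h
        · exact Or.inr (Or.inl (by linarith))
      · exact Or.inr (Or.inr (Or.inl (by linarith)))
    · exact Or.inr (Or.inr (Or.inr (by linarith)))
  apply atmost _ 5 (-4) (by norm_num)
  · rw [← trace_eq_sum_eig hA, hEq, Matrix.trace]
    norm_num [Fin.sum_univ_succ, Matrix.diag]
  · intro m hm; rcases hroot m with h|h|h|h <;> linarith
  · intro m; rcases hroot m with h|h|h|h <;> linarith

private lemma caseJ {A : Matrix (Fin 4) (Fin 4) ℝ} (hA : A.IsHermitian)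
    (hEq : A = !![0,1,1,1;1,0,1,1;1,1,0,1;1,1,1,0]) :
    (Finset.univ.filter fun m => 0 < hA.eigenvalues m).card ≤ 1 := by
  have hroot : ∀ m, hA.eigenvalues m = 3 ∨ hA.eigenvalues m = -1 := by
    intro m
    have hd := eig_det_zero hA m
    obtain ⟨x, hx⟩ : ∃ x, hA.eigenvalues m = x := ⟨_, rfl⟩
    rw [hx] at hd ⊢
    rw [hEq] at hd
    have h4 : (x-3)*(x+1)*(x+1)*(x+1) = 0 := by
      rw [Matrix.det_succ_row_zero] at hd
      simp [Fin.sum_univ_succ, Matrix.det_fin_three, Matrix.one_apply, Fin.succAbove] at hd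
      linarith [hd]
    rcases mul_eq_zero.1 h4 with h | h
    · rcases mul_eq_zero.1 h with h | h
      · rcases mul_eq_zero.1 h with h | h
        · exact Or.inl (by linarith)
        · exact Or.inr (by linarith)
      · exact Or.inr (by linarith)
    · exact Or.inr (by linarith)
  apply atmost _ 3 (-1) (by norm_num)
  · rw [← trace_eq_sum_eig hA, hEq, Matrix.trace]
    norm_num [Fin.sum_univ_succ, Matrix.diag]
  · intro m hm; rcases hroot m with h|h <;> linarith
  · intro m; rcases hroot m with h|h <;> linarith

theorem stmt3 :
    ∀ i : Fin 5,
    ∀ hN : ((!![0, 4, 1, 1, 1;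
                4, 0, 1, 1, 1;
                1, 1, 0, 1, 1;
                1, 1, 1, 0, 1;
                1, 1, 1, 1, 0] : Matrix (Fin 5) (Fin 5) ℝ).submatrix
                  i.succAbove i.succAbove).IsHermitian,
      (Finset.univ.filter fun m => 0 < hN.eigenvalues m).card ≤ 1 := by
  intro i hN
  fin_cases i
  · exact caseJ hN (by ext a b; fin_cases a <;> fin_cases b <;> rfl)
  · exact caseJ hN (by ext a b; fin_cases a <;> fin_cases b <;> rfl)
  · exact caseB hN (by ext a b; fin_cases a <;> fin_cases b <;> rfl)
  · exact caseB hN (by ext a b; fin_cases a <;> fin_cases b <;> rfl)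
  · exact caseB hN (by ext a b; fin_cases a <;> fin_cases b <;> rfl)
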